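/- For the Cauchy scale model, define f(a,b) = (a²+b²)/(2ab) − (1/(2n)) Σ_{i=1}^n a²(b²+y_i²)²/(b²(a²+y_i²)²) for a, b ≥ ε > 0. There exists b₀ < ∞ such that for all a ≥ ε and all b ≥ b₀, the partial derivative ∂f/∂b (a,b) is negative; consequently sup_{b ≥ ε} f(a,b) = sup_{b ∈ [ε,b₀]} f(a,b) for every a ≥ ε. -/

import Mathlib

open Real

private lemma cauchy_aux_hasDerivAt (n : ℕ) (y : Fin n → ℝ) (a b : ℝ)
    (ha : 0 < a) (hb : 0 < b) :
    HasDerivAt (fun b' : ℝ =>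
        (a^2 + b'^2) / (2 * a * b') -
          (1 / (2 * (n:ℝ))) * ∑ i : Fin n,
            a^2 * (b'^2 + (y i)^2)^2 / (b'^2 * (a^2 + (y i)^2)^2))
      (1/(2*a) - a/(2*b^2)
        - (1/(2*(n:ℝ))) * ∑ i : Fin n,
            2*a^2*(b^4 - (y i)^4) / (b^3 * (a^2 + (y i)^2)^2)) b := by
  have hb0 : b ≠ 0 := ne_of_gt hb
  have ha0 : a ≠ 0 := ne_of_gt ha
  have h1 : HasDerivAt (fun b' : ℝ => (a^2 + b'^2) / (2*a*b'))
      (1/(2*a) - a/(2*b^2)) b := by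
    have hnum : HasDerivAt (fun b' : ℝ => a^2 + b'^2) (2*b) b := by
      simpa using ((hasDerivAt_pow 2 b).const_add (a^2))
    have hden : HasDerivAt (fun b' : ℝ => 2*a*b') (2*a) b := by
      simpa using (hasDerivAt_id b).const_mul (2*a)
    have h := hnum.fun_div hden (by positivity)
    refine h.congr_deriv ?_
    field_simp
    ring
  have h2 : ∀ i : Fin n, HasDerivAt (fun b' : ℝ =>
      a^2 * (b'^2 + (y i)^2)^2 / (b'^2 * (a^2 + (y i)^2)^2))
      (2*a^2*(b^4 - (y i)^4) / (b^3 * (a^2 + (y i)^2)^2)) b := by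
    intro i
    have hay : a^2 + (y i)^2 ≠ 0 := by positivity
    have hnum0 : HasDerivAt (fun b' : ℝ => b'^2 + (y i)^2) (2*b) b := by
      simpa using ((hasDerivAt_pow 2 b).add_const ((y i)^2))
    have hnum : HasDerivAt (fun b' : ℝ => a^2 * (b'^2 + (y i)^2)^2)
        (a^2 * (((2:ℕ):ℝ) * (b^2 + (y i)^2)^1 * (2*b))) b := (hnum0.pow 2).const_mul (a^2)
    have hden : HasDerivAt (fun b' : ℝ => b'^2 * (a^2 + (y i)^2)^2)
        (2*b * (a^2 + (y i)^2)^2) b := by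
      simpa using (hasDerivAt_pow 2 b).mul_const ((a^2 + (y i)^2)^2)
    have h := hnum.fun_div hden (by positivity)
    refine h.congr_deriv ?_
    field_simp
    ring
  have hsum : HasDerivAt (fun b' : ℝ => ∑ i : Fin n,
      a^2 * (b'^2 + (y i)^2)^2 / (b'^2 * (a^2 + (y i)^2)^2))
      (∑ i : Fin n, 2*a^2*(b^4 - (y i)^4) / (b^3 * (a^2 + (y i)^2)^2)) b :=
    HasDerivAt.fun_sum fun i _ => h2 i
  exact h1.sub (hsum.const_mul _)

set_option maxHeartbeats 1000000 in
/-- For the dual objective `f(a,b)` of the Pearson χ² divergence in the Cauchy scale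
model, there exists `b₀` such that `∂f/∂b(a,b) < 0` for all `a ≥ ε` and `b ≥ b₀`;
consequently `sup_{b ≥ ε} f(a,b) = sup_{b ∈ [ε,b₀]} f(a,b)` for every `a ≥ ε`. -/
theorem cauchy_dual_objective_eventually_decreasing
    (ε : ℝ) (hε : 0 < ε) (n : ℕ) (hn : 0 < n) (y : Fin n → ℝ) :
    ∃ b₀ : ℝ, ε ≤ b₀ ∧
      (∀ a : ℝ, ε ≤ a → ∀ b : ℝ, b₀ ≤ b →
        deriv (fun b' : ℝ =>
          (a^2 + b'^2) / (2 * a * b') -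
            (1 / (2 * n)) * ∑ i : Fin n,
              a^2 * (b'^2 + (y i)^2)^2 / (b'^2 * (a^2 + (y i)^2)^2)) b < 0) ∧
      (∀ a : ℝ, ε ≤ a →
        sSup ((fun b : ℝ =>
          (a^2 + b^2) / (2 * a * b) -
            (1 / (2 * n)) * ∑ i : Fin n,
              a^2 * (b^2 + (y i)^2)^2 / (b^2 * (a^2 + (y i)^2)^2)) '' Set.Ici ε)
        = sSup ((fun b : ℝ =>
          (a^2 + b^2) / (2 * a * b) -
            (1 / (2 * n)) * ∑ i : Fin n,
              a^2 * (b^2 + (y i)^2)^2 / (b^2 * (a^2 + (y i)^2)^2)) '' Set.Icc ε b₀)) := by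
  classical
  obtain ⟨S, hS_def⟩ : ∃ S : ℝ, S = 1 + ∑ i : Fin n, (y i)^2 := ⟨_, rfl⟩
  have hsum0 : (0:ℝ) ≤ ∑ i : Fin n, (y i)^2 :=
    Finset.sum_nonneg fun i _ => sq_nonneg _
  have hS1 : (1:ℝ) ≤ S := by rw [hS_def]; linarith
  have hS0 : (0:ℝ) < S := lt_of_lt_of_le one_pos hS1
  have hyS : ∀ i : Fin n, (y i)^2 ≤ S := by
    intro i
    have h := Finset.single_le_sum (fun j (_ : j ∈ Finset.univ) => sq_nonneg (y j))
      (Finset.mem_univ i)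
    rw [hS_def]; linarith
  obtain ⟨b₀, hb₀_def⟩ : ∃ b₀ : ℝ, b₀ = ε + 2*S + 16*S^2/ε^3 := ⟨_, rfl⟩
  have hdivnn : (0:ℝ) ≤ 16*S^2/ε^3 := by positivity
  have hεb₀ : ε ≤ b₀ := by rw [hb₀_def]; linarith
  have hb₀pos : 0 < b₀ := lt_of_lt_of_le hε hεb₀
  have hnpos : (0:ℝ) < (n:ℝ) := by exact_mod_cast hn
  -- key negativity of the closed-form derivative
  have hDneg : ∀ a : ℝ, ε ≤ a → ∀ b : ℝ, b₀ ≤ b →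
      (1/(2*a) - a/(2*b^2)
        - (1/(2*(n:ℝ))) * ∑ i : Fin n,
            2*a^2*(b^4 - (y i)^4) / (b^3 * (a^2 + (y i)^2)^2)) < 0 := by
    intro a ha b hb
    have hapos : 0 < a := lt_of_lt_of_le hε ha
    have hbpos : 0 < b := lt_of_lt_of_le hb₀pos hb
    have haS : 0 < a^2 + S := by nlinarith [sq_nonneg a]
    have haS2 : 0 < (a^2 + S)^2 := pow_pos haS 2
    have hb2S : 2*S ≤ b := by rw [hb₀_def] at hb; linarith
    have hb2 : (2:ℝ) ≤ b := by linarith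
    have hb16 : 16*S^2 ≤ b * ε^3 := by
      have h : 16*S^2/ε^3 ≤ b := by rw [hb₀_def] at hb; linarith
      rw [div_le_iff₀ (by positivity)] at h
      linarith
    -- per-term lower bound for the sum
    have hterm : ∀ i : Fin n,
        (7/4)*a^2*b/(a^2+S)^2 ≤ 2*a^2*(b^4 - (y i)^4) / (b^3 * (a^2 + (y i)^2)^2) := by
      intro i
      have hy := hyS i
      have hy4 : (y i)^4 ≤ S^2 := by
        nlinarith [pow_le_pow_left₀ (sq_nonneg (y i)) hy 2]
      have hSb : S^2 ≤ b^2/4 := by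
        nlinarith [mul_nonneg (sub_nonneg.2 hb2S) (by linarith : (0:ℝ) ≤ b + 2*S)]
      have hbb4 : b^2/4 ≤ b^4/8 := by
        nlinarith [mul_nonneg (sq_nonneg b)
          (show (0:ℝ) ≤ b^2 - 2 by nlinarith [sq_nonneg (b-2)])]
      have h7 : (7/8)*b^4 ≤ b^4 - (y i)^4 := by linarith
      have hC : (0:ℝ) ≤ b^4 - (y i)^4 := le_trans (by positivity) h7
      have hden : (a^2 + (y i)^2)^2 ≤ (a^2 + S)^2 :=
        pow_le_pow_left₀ (by positivity) (by linarith [hy]) 2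
      have hdpos : 0 < b^3 * (a^2 + (y i)^2)^2 := by
        have : (0:ℝ) < a^2 + (y i)^2 := by positivity
        exact mul_pos (pow_pos hbpos 3) (pow_pos this 2)
      calc (7/4)*a^2*b/(a^2+S)^2 = 2*a^2*((7/8)*b^4) / (b^3 * (a^2+S)^2) := by
            rw [div_eq_div_iff (ne_of_gt haS2) (ne_of_gt (mul_pos (pow_pos hbpos 3) haS2))]
            ring
        _ ≤ 2*a^2*(b^4 - (y i)^4) / (b^3 * (a^2 + (y i)^2)^2) := by
            apply div_le_div₀ (mul_nonneg (by positivity) hC)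
            · nlinarith [mul_nonneg (sq_nonneg a) (sub_nonneg.2 h7)]
            · exact hdpos
            · exact mul_le_mul_of_nonneg_left hden (le_of_lt (pow_pos hbpos 3))
    have hsum_lb : (n:ℝ) * ((7/4)*a^2*b/(a^2+S)^2)
        ≤ ∑ i : Fin n, 2*a^2*(b^4 - (y i)^4) / (b^3 * (a^2 + (y i)^2)^2) := by
      have h := Finset.sum_le_sum (fun i (_ : i ∈ Finset.univ) => hterm i)
      rw [Finset.sum_const, Finset.card_univ, Fintype.card_fin, nsmul_eq_mul] at h
      exact h
    have hfactor : (7/8)*a^2*b/(a^2+S)^2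
        ≤ (1/(2*(n:ℝ))) * ∑ i : Fin n,
            2*a^2*(b^4 - (y i)^4) / (b^3 * (a^2 + (y i)^2)^2) := by
      have h := mul_le_mul_of_nonneg_left hsum_lb
        (by positivity : (0:ℝ) ≤ 1/(2*(n:ℝ)))
      have heq : (1/(2*(n:ℝ))) * ((n:ℝ) * ((7/4)*a^2*b/(a^2+S)^2))
          = (7/8)*a^2*b/(a^2+S)^2 := by
        field_simp
        ring
      rw [heq] at h
      exact h
    -- now show 1/(2a) - a/(2b²) - (7/8)a²b/(a²+S)² < 0
    have hmain : 1/(2*a) - a/(2*b^2) - (7/8)*a^2*b/(a^2+S)^2 < 0 := by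
      rcases le_or_gt (a^2) (4*S) with hcase | hcase
      · -- small a
        have h1 : 1/(2*a) ≤ 1/(2*ε) := by gcongr
        have h2 : (7/8)*ε^2*b/(25*S^2) ≤ (7/8)*a^2*b/(a^2+S)^2 := by
          apply div_le_div₀ (by positivity)
          · nlinarith [mul_nonneg hbpos.le
              (mul_nonneg (sub_nonneg.2 ha) (by linarith : (0:ℝ) ≤ a + ε))]
          · exact haS2
          · nlinarith [mul_nonneg (sub_nonneg.2 hcase) (by nlinarith [sq_nonneg a] :
              (0:ℝ) ≤ 6*S + a^2)]
        have h3 : 1/(2*ε) < (7/8)*ε^2*b/(25*S^2) := by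
          rw [div_lt_div_iff₀ (by positivity) (by nlinarith [pow_pos hS0 2] :
            (0:ℝ) < 25*S^2)]
          nlinarith [hb16, pow_pos hS0 2]
        have h4 : 0 < a/(2*b^2) := by positivity
        linarith
      · -- large a
        have h4 : (14/25)*b/a^2 ≤ (7/8)*a^2*b/(a^2+S)^2 := by
          rw [div_le_div_iff₀ (pow_pos hapos 2) haS2]
          nlinarith [mul_nonneg (mul_nonneg hbpos.le (sub_nonneg.2 hcase.le))
            (by nlinarith [sq_nonneg a] : (0:ℝ) ≤ 9*a^2 + 4*S)]
        rcases le_or_gt b a with hba | hab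
        · have h5 : 1/(2*a) ≤ a/(2*b^2) := by
            rw [div_le_div_iff₀ (by positivity) (by positivity)]
            nlinarith
          have h6 : 0 < (14/25)*b/a^2 := by positivity
          linarith
        · have h5 : 1/(2*a) < (14/25)*b/a^2 := by
            rw [div_lt_div_iff₀ (by positivity) (pow_pos hapos 2)]
            nlinarith [mul_pos hapos hapos]
          have h6 : 0 < a/(2*b^2) := by positivity
          linarith
    linarith
  have hderiv_eq : ∀ a : ℝ, ε ≤ a → ∀ b : ℝ, 0 < b →
      deriv (fun b' : ℝ =>
          (a^2 + b'^2) / (2 * a * b') -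
            (1 / (2 * (n:ℝ))) * ∑ i : Fin n,
              a^2 * (b'^2 + (y i)^2)^2 / (b'^2 * (a^2 + (y i)^2)^2)) b
        = (1/(2*a) - a/(2*b^2)
        - (1/(2*(n:ℝ))) * ∑ i : Fin n,
            2*a^2*(b^4 - (y i)^4) / (b^3 * (a^2 + (y i)^2)^2)) := by
    intro a ha b hb
    exact (cauchy_aux_hasDerivAt n y a b (lt_of_lt_of_le hε ha) hb).deriv
  refine ⟨b₀, hεb₀, ?_, ?_⟩
  · intro a ha b hb
    rw [hderiv_eq a ha b (lt_of_lt_of_le hb₀pos hb)]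
    exact hDneg a ha b hb
  · intro a ha
    have hapos : 0 < a := lt_of_lt_of_le hε ha
    have hanti : StrictAntiOn (fun b : ℝ =>
        (a^2 + b^2) / (2 * a * b) -
          (1 / (2 * (n:ℝ))) * ∑ i : Fin n,
            a^2 * (b^2 + (y i)^2)^2 / (b^2 * (a^2 + (y i)^2)^2)) (Set.Ici b₀) := by
      apply strictAntiOn_of_deriv_neg (convex_Ici b₀)
      · intro x hx
        exact (cauchy_aux_hasDerivAt n y a x hapos
          (lt_of_lt_of_le hb₀pos hx)).continuousAt.continuousWithinAt
      · intro x hx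
        rw [interior_Ici] at hx
        rw [hderiv_eq a ha x (lt_of_lt_of_le hb₀pos (le_of_lt hx))]
        exact hDneg a ha x (le_of_lt hx)
    have hmono : ∀ b : ℝ, b₀ ≤ b →
        (fun b : ℝ =>
          (a^2 + b^2) / (2 * a * b) -
            (1 / (2 * (n:ℝ))) * ∑ i : Fin n,
              a^2 * (b^2 + (y i)^2)^2 / (b^2 * (a^2 + (y i)^2)^2)) b
        ≤ (fun b : ℝ =>
          (a^2 + b^2) / (2 * a * b) -
            (1 / (2 * (n:ℝ))) * ∑ i : Fin n,
              a^2 * (b^2 + (y i)^2)^2 / (b^2 * (a^2 + (y i)^2)^2)) b₀ := by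
      intro b hb
      rcases eq_or_lt_of_le hb with rfl | hlt
      · exact le_refl _
      · exact le_of_lt (hanti Set.self_mem_Ici hb hlt)
    apply csSup_eq_csSup_of_forall_exists_le
    · rintro x ⟨b, hb, rfl⟩
      rcases le_or_gt b b₀ with hbb | hbb
      · exact ⟨_, Set.mem_image_of_mem _ ⟨hb, hbb⟩, le_refl _⟩
      · exact ⟨_, Set.mem_image_of_mem _ ⟨hεb₀, le_refl b₀⟩, hmono b (le_of_lt hbb)⟩
    · rintro x ⟨b, hb, rfl⟩
      exact ⟨_, Set.mem_image_of_mem _ hb.1, le_refl _⟩
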